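/- Let G be a profinite group and Λ < G a dense subgroup. If N is a finite normal subgroup of Λ, then N is a normal subgroup of G. -/

import Mathlib

/-- If `Λ` is a dense subgroup of a profinite group `G` and `N ≤ Λ` is a finite
subgroup which is normal in `Λ`, then `N` is normal in `G`. -/
theorem finite_normal_in_dense_subgroup_is_normal (G : Type) [Group G]
    [TopologicalSpace G] [IsTopologicalGroup G] [CompactSpace G] [T2Space G]
    [TotallyDisconnectedSpace G]
    (Λ : Subgroup G) (hΛ : Dense (Λ : Set G))
    (N : Subgroup G) (hNΛ : N ≤ Λ) (hNfin : Finite ↥N)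
    (hNnorm : ∀ x ∈ Λ, ∀ n ∈ N, x * n * x⁻¹ ∈ N) :
    N.Normal := by
  constructor
  intro n hn g
  have hNset : (N : Set G).Finite := Set.toFinite _
  have hclosed : IsClosed (N : Set G) := hNset.isClosed
  have hcont : Continuous fun x : G => x * n * x⁻¹ :=
    (continuous_id.mul continuous_const).mul continuous_inv
  have hS : IsClosed ((fun x : G => x * n * x⁻¹) ⁻¹' (N : Set G)) :=
    hclosed.preimage hcont
  have hsub : (Λ : Set G) ⊆ (fun x : G => x * n * x⁻¹) ⁻¹' (N : Set G) :=
    fun x hx => hNnorm x hx n hn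
  have : (Set.univ : Set G) ⊆ (fun x : G => x * n * x⁻¹) ⁻¹' (N : Set G) := by
    rw [← hΛ.closure_eq]
    exact hS.closure_subset_iff.mpr hsub
  exact this (Set.mem_univ g)
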